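/- arXiv:1510.00040 — 5 statements merged into one kernel-verified Lean document; each statement's English description precedes it below -/
import Mathlib

section
/- Let λ ∈ ℂ with Re(λ) < 0, and suppose (λ, (r, q)) is an eigenpair of the Hamiltonian matrix [[Ã, BBᴴ],[C̃ᴴC̃, −Ãᴴ]], i.e., Ãr + BBᴴq = λr and C̃ᴴC̃r − Ãᴴq = λq, and −λ is not an eigenvalue of Ã. Then q = (Ãᴴ + λI)⁻¹ C̃ᴴ (C̃ r), and qᴴr = (1/(2 Re λ))(qᴴBBᴴq + rᴴC̃ᴴC̃r). -/
open Matrix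

theorem hamiltonian_eigenpair_identities
    {n m p : Type*} [Fintype n] [DecidableEq n] [Fintype m] [Fintype p]
    (At : Matrix n n ℂ) (B : Matrix n m ℂ) (Ct : Matrix p n ℂ)
    (r q : n → ℂ) (l : ℂ) (hl : l.re < 0)
    (hinv : IsUnit (Atᴴ + l • (1 : Matrix n n ℂ)))
    (h1 : At.mulVec r + (B * Bᴴ).mulVec q = l • r)
    (h2 : (Ctᴴ * Ct).mulVec r - Atᴴ.mulVec q = l • q) :
    q = (Atᴴ + l • (1 : Matrix n n ℂ))⁻¹.mulVec (Ctᴴ.mulVec (Ct.mulVec r)) ∧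
    dotProduct (star q) r =
      (1 / (2 * (l.re : ℂ))) *
        (dotProduct (star q) ((B * Bᴴ).mulVec q) +
          dotProduct (star r) ((Ctᴴ * Ct).mulVec r)) := by
  have hAq : Atᴴ.mulVec q = (Ctᴴ * Ct).mulVec r - l • q := by
    rw [sub_eq_iff_eq_add] at h2
    rw [h2]; abel
  have key : (Atᴴ + l • (1 : Matrix n n ℂ)).mulVec q = Ctᴴ.mulVec (Ct.mulVec r) := by
    rw [add_mulVec, smul_mulVec, one_mulVec, hAq, mulVec_mulVec]
    abel
  constructor
  · have hdet : IsUnit (Atᴴ + l • (1 : Matrix n n ℂ)).det :=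
      (isUnit_iff_isUnit_det _).mp hinv
    calc q = (1 : Matrix n n ℂ).mulVec q := (one_mulVec q).symm
    _ = ((Atᴴ + l • (1 : Matrix n n ℂ))⁻¹ * (Atᴴ + l • (1 : Matrix n n ℂ))).mulVec q := by
        rw [nonsing_inv_mul _ hdet]
    _ = (Atᴴ + l • (1 : Matrix n n ℂ))⁻¹.mulVec (Ctᴴ.mulVec (Ct.mulVec r)) := by
        rw [← mulVec_mulVec, key]
  · have e1 : dotProduct (star q) (At.mulVec r) +
        dotProduct (star q) ((B * Bᴴ).mulVec q) = l * dotProduct (star q) r := by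
      rw [← dotProduct_add, h1, dotProduct_smul, smul_eq_mul]
    have e2 : dotProduct (star q) (At.mulVec r) =
        dotProduct (star r) ((Ctᴴ * Ct).mulVec r) -
          (starRingEnd ℂ l) * dotProduct (star q) r := by
      have : dotProduct (star q) (At.mulVec r)
          = dotProduct (star (Atᴴ.mulVec q)) r := by
        rw [star_mulVec, dotProduct_mulVec, conjTranspose_conjTranspose]
      rw [this, hAq, star_sub, sub_dotProduct, star_smul, smul_dotProduct,
        star_mulVec, dotProduct_mulVec, conjTranspose_mul,
        conjTranspose_conjTranspose, smul_eq_mul]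
      simp [Complex.star_def]
    have hsum : dotProduct (star q) ((B * Bᴴ).mulVec q) +
        dotProduct (star r) ((Ctᴴ * Ct).mulVec r)
        = (2 * (l.re : ℂ)) * dotProduct (star q) r := by
      have := e1
      rw [e2] at this
      have hc : l + starRingEnd ℂ l = 2 * (l.re : ℂ) := by push_cast [Complex.add_conj]; ring
      linear_combination this + dotProduct (star q) r * hc
    have hne : (2 * (l.re : ℂ)) ≠ 0 := by
      simp only [ne_eq, mul_eq_zero, OfNat.ofNat_ne_zero, false_or, Complex.ofReal_eq_zero]
      exact ne_of_lt hl
    rw [hsum]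
    field_simp
    rw [mul_div_assoc, div_self (by exact_mod_cast ne_of_lt hl), mul_one]
end

section
/- Let Ξ ≥ 0 with R(Ξ) = C̃ᴴC̃, let Re λ < 0 with Ãᴴ + λI invertible where Ã = A − BBᴴΞ. Define Ṽ₁ = √(−2 Re λ)(Ãᴴ + λI)⁻¹C̃ᴴ, Ỹ₁ = I − (1/(2 Re λ))(Ṽ₁ᴴB)(Ṽ₁ᴴB)ᴴ, and X̃₁ = Ṽ₁Ỹ₁⁻¹Ṽ₁ᴴ. Then R(Ξ + X̃₁) = ĈᴴĈ with Ĉᴴ = C̃ᴴ + √(−2 Re λ) · Ṽ₁Ỹ₁⁻¹; in particular R(Ξ + X̃₁) ≥ 0. -/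
open Matrix
open scoped ComplexOrder

theorem residual_update_factorization
    {n m p : Type*} [Fintype n] [DecidableEq n] [Fintype m] [Fintype p] [DecidableEq p]
    (A Q Ξ : Matrix n n ℂ) (B : Matrix n m ℂ) (Ct : Matrix p n ℂ)
    (l : ℂ) (hl : l.re < 0)
    (hΞ : Ξ.PosSemidef)
    (hres : Aᴴ * Ξ + Ξ * A + Q - Ξ * (B * Bᴴ) * Ξ = Ctᴴ * Ct)
    (hinv : IsUnit ((A - B * Bᴴ * Ξ)ᴴ + l • (1 : Matrix n n ℂ)))
    (Vt : Matrix n p ℂ)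
    (hVt : Vt = (Real.sqrt (-2 * l.re) : ℂ) •
        ((A - B * Bᴴ * Ξ)ᴴ + l • (1 : Matrix n n ℂ))⁻¹ * Ctᴴ)
    (Yt : Matrix p p ℂ)
    (hYt : Yt = (1 : Matrix p p ℂ) -
        (1 / (2 * (l.re : ℂ))) • ((Vtᴴ * B) * (Vtᴴ * B)ᴴ))
    (X : Matrix n n ℂ)
    (hX : X = Ξ + Vt * Yt⁻¹ * Vtᴴ)
    (Chat : Matrix n p ℂ)
    (hChat : Chat = Ctᴴ + (Real.sqrt (-2 * l.re) : ℂ) • (Vt * Yt⁻¹)) :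
    Aᴴ * X + X * A + Q - X * (B * Bᴴ) * X = Chat * Chatᴴ ∧
    (Aᴴ * X + X * A + Q - X * (B * Bᴴ) * X).PosSemidef := by
  -- Yt is positive definite, hence invertible and Hermitian
  have hYpos : Yt.PosDef := by
    set t : ℝ := Real.sqrt (-(1 / (2 * l.re))) with ht
    have htnn : (0:ℝ) ≤ -(1 / (2 * l.re)) :=
      le_of_lt (neg_pos.mpr (div_neg_of_pos_of_neg one_pos (by linarith)))
    have htt : (1 / (2 * (l.re : ℂ))) = -((t:ℂ)*(t:ℂ)) := by
      rw [ht, ← Complex.ofReal_mul, Real.mul_self_sqrt htnn]; push_cast; ring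
    have hY' : Yt = 1 + ((t:ℂ) • (Vtᴴ * B)) * ((t:ℂ) • (Vtᴴ * B))ᴴ := by
      rw [hYt, htt, neg_smul, sub_neg_eq_add]
      congr 1
      simp [conjTranspose_smul, smul_smul, smul_mul_assoc, mul_smul_comm,
        Complex.star_def, Complex.conj_ofReal, ← Complex.ofReal_mul, Complex.coe_smul]
    rw [hY']
    exact Matrix.PosDef.one.add_posSemidef (posSemidef_self_mul_conjTranspose _)
  -- scalar facts
  set s : ℂ := (Real.sqrt (-2 * l.re) : ℂ) with hs
  set c : ℂ := 2 * (l.re : ℂ) with hcdef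
  have hre : (0:ℝ) ≤ -2 * l.re := by linarith
  have hss : s * s = -c := by
    rw [hs, ← Complex.ofReal_mul, Real.mul_self_sqrt hre, hcdef]; push_cast; ring
  have hsstar : star s = s := Complex.conj_ofReal _
  have hc : c ≠ 0 := by
    rw [hcdef]
    simp only [ne_eq, mul_eq_zero, OfNat.ofNat_ne_zero, false_or, Complex.ofReal_eq_zero]
    exact hl.ne
  have hstarl : star l = c - l := by
    rw [eq_sub_iff_add_eq, add_comm, hcdef]
    simpa using Complex.add_conj l
  have hΞH : Ξᴴ = Ξ := hΞ.isHermitian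
  have hYH : Ytᴴ = Yt := hYpos.isHermitian
  have hYd : IsUnit Yt.det := (Matrix.isUnit_iff_isUnit_det _).mp hYpos.isUnit
  have hKY : Yt⁻¹ * Yt = 1 := Matrix.nonsing_inv_mul _ hYd
  have hKH : (Yt⁻¹)ᴴ = Yt⁻¹ := by rw [Matrix.conjTranspose_nonsing_inv, hYH]
  have hid : IsUnit ((A - B * Bᴴ * Ξ)ᴴ + l • (1 : Matrix n n ℂ)).det :=
    (Matrix.isUnit_iff_isUnit_det _).mp hinv
  have eAt : (A - B * Bᴴ * Ξ)ᴴ = Aᴴ - Ξ * (B * Bᴴ) := by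
    simp [conjTranspose_sub, conjTranspose_mul, hΞH, Matrix.mul_assoc]
  -- key identity 1 : Ãᴴ Vt = s Ctᴴ - l Vt
  have h1 : ((A - B * Bᴴ * Ξ)ᴴ + l • (1 : Matrix n n ℂ)) * Vt = s • Ctᴴ := by
    rw [hVt, Matrix.smul_mul, Matrix.mul_smul, ← Matrix.mul_assoc,
      Matrix.mul_nonsing_inv _ hid, Matrix.one_mul]
  have key1 : (A - B * Bᴴ * Ξ)ᴴ * Vt = s • Ctᴴ - l • Vt := by
    rw [Matrix.add_mul, Matrix.smul_mul, Matrix.one_mul] at h1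
    rw [eq_sub_iff_add_eq]; exact h1
  -- key identity 2 : conjugate transpose of key 1
  have key2 : Vtᴴ * (A - B * Bᴴ * Ξ) = s • Ct - (star l) • Vtᴴ := by
    have := congrArg conjTranspose key1
    simpa [conjTranspose_mul, conjTranspose_sub, conjTranspose_smul, hsstar] using this
  -- key identity 3 : Vtᴴ G Vt = c (1 - Yt)
  have key3 : Vtᴴ * (B * Bᴴ) * Vt = c • (1 : Matrix p p ℂ) - c • Yt := by
    have h3 : c • ((1 : Matrix p p ℂ) - Yt) = Vtᴴ * (B * Bᴴ) * Vt := by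
      rw [hYt]
      simp only [sub_sub_cancel, smul_smul]
      rw [mul_one_div, div_self hc, one_smul, conjTranspose_mul,
        conjTranspose_conjTranspose]
      simp [Matrix.mul_assoc]
    rw [← h3, smul_sub]
  -- expansion of the residual at X = Ξ + W
  have expand : Aᴴ * X + X * A + Q - X * (B * Bᴴ) * X
      = (Aᴴ * Ξ + Ξ * A + Q - Ξ * (B * Bᴴ) * Ξ)
        + ((A - B * Bᴴ * Ξ)ᴴ * Vt) * (Yt⁻¹ * Vtᴴ)
        + (Vt * Yt⁻¹) * (Vtᴴ * (A - B * Bᴴ * Ξ))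
        - (Vt * Yt⁻¹) * (Vtᴴ * (B * Bᴴ) * Vt) * (Yt⁻¹ * Vtᴴ) := by
    rw [hX, eAt]
    simp only [Matrix.add_mul, Matrix.mul_add, Matrix.sub_mul, Matrix.mul_sub,
      Matrix.mul_assoc]
    abel
  have hKYK : Yt⁻¹ * (Yt * (Yt⁻¹ * Vtᴴ)) = Yt⁻¹ * Vtᴴ := by
    rw [← Matrix.mul_assoc, hKY, Matrix.one_mul]
  have hChatH : Chatᴴ = Ct + s • (Yt⁻¹ * Vtᴴ) := by
    rw [hChat]
    simp [conjTranspose_add, conjTranspose_smul, conjTranspose_mul, hKH, hsstar]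
  have main : Aᴴ * X + X * A + Q - X * (B * Bᴴ) * X = Chat * Chatᴴ := by
    rw [expand, hres, key1, key2, key3, hChatH, hChat, hstarl]
    simp only [Matrix.mul_add, Matrix.add_mul, Matrix.sub_mul, Matrix.mul_sub,
      Matrix.smul_mul, Matrix.mul_smul, smul_smul, Matrix.mul_assoc, smul_sub, smul_add,
      Matrix.mul_one, Matrix.one_mul, hKY, hKYK, hss]
    module
  refine ⟨main, ?_⟩
  rw [main]
  exact posSemidef_self_mul_conjTranspose Chat
end

section
/- One step of the qADI iteration satisfies the identity X^{qADI}_{k−1/2} − X_{k−1} = −R(X_{k−1})·(A − GX_{k−1} + conj(σ_k)I)⁻¹, where X^{qADI}_{k−1/2} is defined by X^{qADI}_{k−1/2}(A + conj(σ_k)I − GX_{k−1}) = −Q − (Aᴴ − conj(σ_k)I)X_{k−1}, and R(M) = AᴴM + MA + Q − MGM. -/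
open Matrix

theorem qadi_half_step_identity
    {n : Type*} [Fintype n] [DecidableEq n]
    (A G Q X Xh : Matrix n n ℂ)
    (hG : G.IsHermitian) (hQ : Q.IsHermitian) (σ : ℂ)
    (hinv : IsUnit (A + (starRingEnd ℂ σ) • (1 : Matrix n n ℂ) - G * X))
    (hXh : Xh * (A + (starRingEnd ℂ σ) • (1 : Matrix n n ℂ) - G * X) =
      -Q - (Aᴴ - (starRingEnd ℂ σ) • (1 : Matrix n n ℂ)) * X) :
    Xh - X = -(Aᴴ * X + X * A + Q - X * G * X) *
      (A - G * X + (starRingEnd ℂ σ) • (1 : Matrix n n ℂ))⁻¹ := by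
  set S := A + (starRingEnd ℂ σ) • (1 : Matrix n n ℂ) - G * X with hS
  have hS' : A - G * X + (starRingEnd ℂ σ) • (1 : Matrix n n ℂ) = S := by
    rw [hS]; abel
  rw [hS']
  have hdet : IsUnit S.det := (Matrix.isUnit_iff_isUnit_det S).mp hinv
  have hmul : (Xh - X) * S = -(Aᴴ * X + X * A + Q - X * G * X) := by
    rw [sub_mul, hXh, hS]
    simp only [Matrix.mul_sub, Matrix.mul_add, Matrix.sub_mul, Matrix.add_mul,
      Matrix.mul_one, Matrix.smul_mul, Matrix.mul_smul, Matrix.one_mul]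
    noncomm_ring
  calc Xh - X = (Xh - X) * S * S⁻¹ := by
        rw [Matrix.mul_assoc, Matrix.mul_nonsing_inv S hdet, Matrix.mul_one]
    _ = -(Aᴴ * X + X * A + Q - X * G * X) * S⁻¹ := by rw [hmul]
end

section
/- Cayley subspace iteration equals qADI: let X_{k−1} be given, σ_k with Re σ_k < 0, H = [[A, G],[Q, −Aᴴ]], and define [M_k; N_k] = (H − σ_k I)⁻¹(H + conj(σ_k)I)[I; −X_{k−1}], X_k = −N_k M_k⁻¹. Then X_k satisfies (Aᴴ + σ_k I − X_{k−1/2}G)X_k = −Q − X_{k−1/2}(A − σ_k I), where X_{k−1/2} = −N_{k−1/2}M_{k−1/2}⁻¹ with M_{k−1/2} = A + conj(σ_k)I − GX_{k−1}, N_{k−1/2} = Q + (Aᴴ − conj(σ_k)I)X_{k−1}... specifically N_{k−1/2} = Q − (−Aᴴ + conj(σ_k)I)X_{k−1}. -/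
open Matrix

theorem cayley_step_satisfies_qadi
    {n : Type*} [Fintype n] [DecidableEq n]
    (A G Q Xp : Matrix n n ℂ)
    (hG : G.IsHermitian) (hQ : Q.IsHermitian)
    (σ : ℂ) (hσ : σ.re < 0)
    (H : Matrix (n ⊕ n) (n ⊕ n) ℂ)
    (hH : H = Matrix.fromBlocks A G Q (-Aᴴ))
    (hHinv : IsUnit (H - σ • (1 : Matrix (n ⊕ n) (n ⊕ n) ℂ)))
    (MN : Matrix (n ⊕ n) n ℂ)
    (hMN : MN = (H - σ • (1 : Matrix (n ⊕ n) (n ⊕ n) ℂ))⁻¹ *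
      ((H + (starRingEnd ℂ σ) • (1 : Matrix (n ⊕ n) (n ⊕ n) ℂ)) *
        Matrix.fromRows (1 : Matrix n n ℂ) (-Xp)))
    (Mk Nk : Matrix n n ℂ)
    (hMk : Mk = MN.toRows₁) (hNk : Nk = MN.toRows₂)
    (hMkinv : IsUnit Mk)
    (Mh Nh : Matrix n n ℂ)
    (hMh : Mh = A + (starRingEnd ℂ σ) • (1 : Matrix n n ℂ) - G * Xp)
    (hNh : Nh = Q - (-Aᴴ + (starRingEnd ℂ σ) • (1 : Matrix n n ℂ)) * Xp)
    (hMhinv : IsUnit Mh)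
    (Xk Xh : Matrix n n ℂ)
    (hXk : Xk = -Nk * Mk⁻¹) (hXh : Xh = -Nh * Mh⁻¹) :
    (Aᴴ + σ • (1 : Matrix n n ℂ) - Xh * G) * Xk =
      -Q - Xh * (A - σ • (1 : Matrix n n ℂ)) := by
  set c := starRingEnd ℂ σ with hc
  have hdetH : IsUnit (H - σ • (1 : Matrix (n ⊕ n) (n ⊕ n) ℂ)).det :=
    (Matrix.isUnit_iff_isUnit_det _).mp hHinv
  have hdetMk : IsUnit Mk.det := (Matrix.isUnit_iff_isUnit_det _).mp hMkinv
  have hdetMh : IsUnit Mh.det := (Matrix.isUnit_iff_isUnit_det _).mp hMhinv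
  -- (H - σ) * MN = (H + c) * fromRows 1 (-Xp)
  have hkey : (H - σ • (1 : Matrix (n ⊕ n) (n ⊕ n) ℂ)) * MN =
      (H + c • (1 : Matrix (n ⊕ n) (n ⊕ n) ℂ)) * Matrix.fromRows (1 : Matrix n n ℂ) (-Xp) := by
    rw [hMN, ← Matrix.mul_assoc, Matrix.mul_nonsing_inv _ hdetH, Matrix.one_mul]
  have hS : H - σ • (1 : Matrix (n ⊕ n) (n ⊕ n) ℂ) =
      Matrix.fromBlocks (A - σ • 1) G Q (-Aᴴ - σ • 1) := by
    rw [hH, ← Matrix.fromBlocks_one, Matrix.fromBlocks_smul]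
    ext (i | i) (j | j) <;> simp [Matrix.fromBlocks]
  have hT : H + c • (1 : Matrix (n ⊕ n) (n ⊕ n) ℂ) =
      Matrix.fromBlocks (A + c • 1) G Q (-Aᴴ + c • 1) := by
    rw [hH, ← Matrix.fromBlocks_one, Matrix.fromBlocks_smul]
    ext (i | i) (j | j) <;> simp [Matrix.fromBlocks]
  have hMNrows : MN = Matrix.fromRows Mk Nk := by
    rw [hMk, hNk, Matrix.fromRows_toRows]
  rw [hS, hT, hMNrows, Matrix.fromBlocks_mul_fromRows, Matrix.fromBlocks_mul_fromRows] at hkey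
  have eq1 : (A - σ • 1) * Mk + G * Nk = Mh := by
    have := congrArg Matrix.toRows₁ hkey
    simpa [Matrix.toRows₁_fromRows, hMh, Matrix.mul_neg, sub_eq_add_neg] using this
  have eq2 : Q * Mk + (-Aᴴ - σ • 1) * Nk = Nh := by
    have := congrArg Matrix.toRows₂ hkey
    simp only [Matrix.toRows₂_fromRows] at this
    rw [this, hNh]
    simp [Matrix.mul_neg, Matrix.add_mul, sub_eq_add_neg]
  -- Nk = -(Xk * Mk), Nh = -(Xh * Mh)
  have hNkX : Nk = -(Xk * Mk) := by
    simp [hXk, Matrix.neg_mul, mul_assoc, Matrix.nonsing_inv_mul _ hdetMk]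
  have hNhX : Nh = -(Xh * Mh) := by
    simp [hXh, Matrix.neg_mul, mul_assoc, Matrix.nonsing_inv_mul _ hdetMh]
  rw [hNkX] at eq1 eq2
  rw [hNhX] at eq2
  -- cancel Mk on the right
  have hcancel : ∀ P R : Matrix n n ℂ, P * Mk = R * Mk → P = R := by
    intro P R h
    have := congrArg (· * Mk⁻¹) h
    simpa [mul_assoc, Matrix.mul_nonsing_inv _ hdetMk] using this
  apply hcancel
  have eMh : Mh = (A - σ • 1) * Mk - G * (Xk * Mk) := by
    rw [← eq1, Matrix.mul_neg, ← sub_eq_add_neg]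
  rw [eMh] at eq2
  -- eq2 : Q * Mk + (-Aᴴ - σ•1) * -(Xk*Mk) = -(Xh * ((A-σ•1)*Mk - G*(Xk*Mk)))
  have expand : ((Aᴴ + σ • (1 : Matrix n n ℂ) - Xh * G) * Xk) * Mk =
      (Q * Mk + (-Aᴴ - σ • 1) * -(Xk * Mk)) - Q * Mk - (Xh * G) * (Xk * Mk) := by
    simp only [Matrix.sub_mul, Matrix.add_mul, Matrix.neg_mul, Matrix.mul_neg, mul_assoc]
    abel
  rw [expand, eq2]
  simp only [Matrix.mul_sub, Matrix.sub_mul, Matrix.neg_mul, Matrix.mul_neg, neg_sub, mul_assoc]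
  abel
end

section
/- Double-step RADI with conjugate shifts: if σ₂ = conj(σ₁) = conj(σ) with σ ∈ ℂ∖ℝ, Re σ < 0, then V₂ = V₁ + 2 conj(σ)·Im(V₁)·S⁻¹Ỹ₁, where S = Im(σ)Ỹ₁ + (V₁ᴴB)V_iᴴ with V_i = (Im V₁)ᵀB, and Ỹ₁ = I − (1/(2 Re σ))(V₁ᴴB)(V₁ᴴB)ᴴ. -/
open Matrix

namespace RadiAux

lemma conj_real {q r : Type*} (M : Matrix q r ℝ) :
    (M.map Complex.ofReal).map (starRingEnd ℂ) = M.map Complex.ofReal := by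
  ext i j; simp [Matrix.map_apply, Complex.conj_ofReal]

lemma conj_mul {q r s : Type*} [Fintype r] (M : Matrix q r ℂ) (N : Matrix r s ℂ) :
    (M * N).map (starRingEnd ℂ) = M.map (starRingEnd ℂ) * N.map (starRingEnd ℂ) := by
  ext i j; simp [Matrix.map_apply, Matrix.mul_apply, map_sum]

lemma conj_smul {q r : Type*} (c : ℂ) (M : Matrix q r ℂ) :
    (c • M).map (starRingEnd ℂ) = (starRingEnd ℂ c) • M.map (starRingEnd ℂ) := by
  ext i j; simp [Matrix.map_apply]

lemma conj_add {q r : Type*} (M N : Matrix q r ℂ) :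
    (M + N).map (starRingEnd ℂ) = M.map (starRingEnd ℂ) + N.map (starRingEnd ℂ) := by
  ext i j; simp [Matrix.map_apply]

lemma conj_one {q : Type*} [DecidableEq q] :
    (1 : Matrix q q ℂ).map (starRingEnd ℂ) = 1 := by
  ext i j; simp [Matrix.map_apply, Matrix.one_apply, apply_ite]

lemma real_map_mul {q r s : Type*} [Fintype r] (M : Matrix q r ℝ) (N : Matrix r s ℝ) :
    (M.map Complex.ofReal) * (N.map Complex.ofReal) = (M * N).map Complex.ofReal := by
  ext i j
  simp [Matrix.map_apply, Matrix.mul_apply]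

lemma real_map_sub {q r : Type*} (M N : Matrix q r ℝ) :
    (M.map Complex.ofReal) - (N.map Complex.ofReal) = (M - N).map Complex.ofReal := by
  ext i j; simp [Matrix.map_apply]

end RadiAux

theorem radi_double_step_conjugate_shift
    {n m p : Type*} [Fintype n] [DecidableEq n] [Fintype m] [Fintype p] [DecidableEq p]
    (A X0 : Matrix n n ℝ) (B : Matrix n m ℝ) (R0 : Matrix n p ℝ)
    (σ : ℂ) (hσre : σ.re < 0) (hσim : σ.im ≠ 0)
    (Ac X0c : Matrix n n ℂ) (Bc : Matrix n m ℂ) (R0c : Matrix n p ℂ)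
    (hAc : Ac = A.map Complex.ofReal) (hX0c : X0c = X0.map Complex.ofReal)
    (hBc : Bc = B.map Complex.ofReal) (hR0c : R0c = R0.map Complex.ofReal)
    (Gc : Matrix n n ℂ) (hGc : Gc = Bc * Bcᴴ)
    (hinv1 : IsUnit (Acᴴ - X0c * Gc + σ • (1 : Matrix n n ℂ)))
    (V1 : Matrix n p ℂ)
    (hV1 : V1 = (Real.sqrt (-2 * σ.re) : ℂ) •
        (Acᴴ - X0c * Gc + σ • (1 : Matrix n n ℂ))⁻¹ * R0c)
    (Y1 : Matrix p p ℂ)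
    (hY1 : Y1 = (1 : Matrix p p ℂ) -
        (1 / (2 * (σ.re : ℂ))) • ((V1ᴴ * Bc) * (V1ᴴ * Bc)ᴴ))
    (hY1inv : IsUnit Y1)
    (X1 : Matrix n n ℂ) (hX1 : X1 = X0c + V1 * Y1⁻¹ * V1ᴴ)
    (R1 : Matrix n p ℂ)
    (hR1 : R1 = R0c + (Real.sqrt (-2 * σ.re) : ℂ) • (V1 * Y1⁻¹))
    (hinv2 : IsUnit (Acᴴ - X1 * Gc + (starRingEnd ℂ σ) • (1 : Matrix n n ℂ)))
    (V2 : Matrix n p ℂ)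
    (hV2 : V2 = (Real.sqrt (-2 * σ.re) : ℂ) •
        (Acᴴ - X1 * Gc + (starRingEnd ℂ σ) • (1 : Matrix n n ℂ))⁻¹ * R1)
    (ImV : Matrix n p ℂ)
    (hImV : ImV = Matrix.of fun i j => ((V1 i j).im : ℂ))
    (Vi : Matrix p m ℂ) (hVi : Vi = ImVᵀ * Bc)
    (S : Matrix p p ℂ)
    (hS : S = (σ.im : ℂ) • Y1 + (V1ᴴ * Bc) * Viᴴ)
    (hSinv : IsUnit S) :
    V2 = V1 + (2 * starRingEnd ℂ σ) • (ImV * (S⁻¹ * Y1)) := by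
  classical
  set α : ℂ := ((Real.sqrt (-2 * σ.re) : ℝ) : ℂ) with hαdef
  have h2re : (0:ℝ) < -2 * σ.re := by linarith
  have hα2 : α * α = (-2 : ℂ) * (σ.re : ℂ) := by
    rw [hαdef, ← Complex.ofReal_mul, Real.mul_self_sqrt h2re.le]
    push_cast; ring
  set K : Matrix p m ℂ := V1ᴴ * Bc with hKdef
  set M0 : Matrix n n ℂ := Acᴴ - X0c * Gc + σ • (1 : Matrix n n ℂ) with hM0def
  set M0' : Matrix n n ℂ := Acᴴ - X0c * Gc + (starRingEnd ℂ σ) • (1 : Matrix n n ℂ) with hM0'def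
  set M1 : Matrix n n ℂ := Acᴴ - X1 * Gc + (starRingEnd ℂ σ) • (1 : Matrix n n ℂ) with hM1def
  have hdet0 : IsUnit M0.det := (Matrix.isUnit_iff_isUnit_det _).mp hinv1
  have hdet1 : IsUnit M1.det := (Matrix.isUnit_iff_isUnit_det _).mp hinv2
  have hdetY : IsUnit Y1.det := (Matrix.isUnit_iff_isUnit_det _).mp hY1inv
  have hdetS : IsUnit S.det := (Matrix.isUnit_iff_isUnit_det _).mp hSinv
  have hY1invY1 : Y1⁻¹ * Y1 = 1 := Matrix.nonsing_inv_mul _ hdetY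
  have hSS : S * S⁻¹ = 1 := Matrix.mul_nonsing_inv _ hdetS
  -- basic real-form facts
  have hAcH : Acᴴ = (Aᵀ).map Complex.ofReal := by
    rw [hAc]; ext i j
    simp [Matrix.conjTranspose_apply, Matrix.map_apply, Complex.conj_ofReal]
  have hBcH : Bcᴴ = (Bᵀ).map Complex.ofReal := by
    rw [hBc]; ext i j
    simp [Matrix.conjTranspose_apply, Matrix.map_apply, Complex.conj_ofReal]
  have hGr : Gc = (B * Bᵀ).map Complex.ofReal := by
    rw [hGc, hBcH, hBc, RadiAux.real_map_mul]
  -- step 1 : M0 * V1 = α • R0c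
  have hM0V1 : M0 * V1 = α • R0c := by
    rw [hV1, Matrix.smul_mul, Matrix.mul_smul, ← Matrix.mul_assoc,
      Matrix.mul_nonsing_inv _ hdet0, Matrix.one_mul]
  -- conjugation facts
  have hconjM0 : M0.map (starRingEnd ℂ) = M0' := by
    rw [hM0def, hM0'def, hAcH, hX0c, hGr, RadiAux.real_map_mul, RadiAux.real_map_sub]
    rw [RadiAux.conj_add, RadiAux.conj_real, RadiAux.conj_smul, RadiAux.conj_one]
  have hconjR0 : R0c.map (starRingEnd ℂ) = R0c := by
    rw [hR0c]; exact RadiAux.conj_real _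
  have hconjα : (starRingEnd ℂ) α = α := by rw [hαdef]; exact Complex.conj_ofReal _
  set W1 : Matrix n p ℂ := V1.map (starRingEnd ℂ) with hW1def
  have hM0'W1 : M0' * W1 = α • R0c := by
    have h := congrArg (fun M : Matrix n p ℂ => M.map (starRingEnd ℂ)) hM0V1
    simp only [RadiAux.conj_mul, RadiAux.conj_smul, hconjM0, hconjR0, hconjα] at h
    exact h
  have hKH : Kᴴ = Bcᴴ * V1 := by
    rw [hKdef, Matrix.conjTranspose_mul, Matrix.conjTranspose_conjTranspose]
  have hBcHW1 : Bcᴴ * W1 = Kᴴ.map (starRingEnd ℂ) := by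
    have hBcHc : Bcᴴ.map (starRingEnd ℂ) = Bcᴴ := by rw [hBcH]; exact RadiAux.conj_real _
    rw [hW1def, ← hBcHc, ← RadiAux.conj_mul, ← hKH]
  have hGcV1 : Gc * V1 = Bc * Kᴴ := by rw [hGc, Matrix.mul_assoc, ← hKH]
  have hGcW1 : Gc * W1 = Bc * (Kᴴ.map (starRingEnd ℂ)) := by
    rw [hGc, Matrix.mul_assoc, hBcHW1]
  -- K * Kᴴ in terms of Y1
  have hrne : σ.re ≠ 0 := ne_of_lt hσre
  have h2σ : (2 * (σ.re : ℂ)) ≠ 0 :=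
    mul_ne_zero two_ne_zero (Complex.ofReal_ne_zero.mpr hrne)
  have hKK : K * Kᴴ = (2 * (σ.re : ℂ)) • ((1 : Matrix p p ℂ) - Y1) := by
    have h : (1 / (2 * (σ.re : ℂ))) • (K * Kᴴ) = 1 - Y1 := by
      rw [hY1, sub_sub_cancel]
    calc K * Kᴴ = (2 * (σ.re : ℂ)) • ((1 / (2 * (σ.re : ℂ))) • (K * Kᴴ)) := by
          rw [smul_smul, mul_one_div, div_self h2σ, one_smul]
      _ = (2 * (σ.re : ℂ)) • ((1 : Matrix p p ℂ) - Y1) := by rw [h]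
  -- M1 in terms of M0'
  have hM1eq : M1 = M0' - V1 * Y1⁻¹ * V1ᴴ * Gc := by
    rw [hM1def, hM0'def, hX1, Matrix.add_mul]
    abel
  have hsplit : M0' = M0 + ((starRingEnd ℂ) σ - σ) • (1 : Matrix n n ℂ) := by
    rw [hM0'def, hM0def, sub_smul]; abel
  have hM0'V1 : M0' * V1 = α • R0c + ((starRingEnd ℂ) σ - σ) • V1 := by
    rw [hsplit, Matrix.add_mul, hM0V1, Matrix.smul_mul, Matrix.one_mul]
  have hM1V1 : M1 * V1 = α • R0c + ((starRingEnd ℂ) σ - σ) • V1 - V1 * (Y1⁻¹ * (K * Kᴴ)) := by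
    rw [hM1eq, Matrix.sub_mul, hM0'V1]
    congr 1
    rw [Matrix.mul_assoc (V1 * Y1⁻¹ * V1ᴴ) Gc V1, hGcV1]
    simp only [hKdef, Matrix.mul_assoc]
  have hM1W1 : M1 * W1 = α • R0c - V1 * (Y1⁻¹ * (K * (Kᴴ.map (starRingEnd ℂ)))) := by
    rw [hM1eq, Matrix.sub_mul, hM0'W1]
    congr 1
    rw [Matrix.mul_assoc (V1 * Y1⁻¹ * V1ᴴ) Gc W1, hGcW1]
    simp only [hKdef, Matrix.mul_assoc]
  -- ImV in terms of V1, W1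
  have h2I : ((2:ℂ) * Complex.I) ≠ 0 := mul_ne_zero two_ne_zero Complex.I_ne_zero
  have hImV2 : ImV = ((2:ℂ) * Complex.I)⁻¹ • (V1 - W1) := by
    rw [hImV]
    ext i j
    simp only [Matrix.of_apply, Matrix.smul_apply, Matrix.sub_apply, hW1def,
      Matrix.map_apply, smul_eq_mul]
    rw [Complex.sub_conj]
    push_cast
    field_simp
  have hImVconj : ImVᵀᴴ = ImV := by
    rw [hImV]; ext i j
    simp [Matrix.conjTranspose_apply, Matrix.transpose_apply, Complex.conj_ofReal]
  have hViH : Viᴴ = ((2:ℂ) * Complex.I)⁻¹ • (Kᴴ - Kᴴ.map (starRingEnd ℂ)) := by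
    rw [hVi, Matrix.conjTranspose_mul, hImVconj, hImV2, Matrix.mul_smul, Matrix.mul_sub,
      hBcHW1, ← hKH]
  have hKHsub : Kᴴ - Kᴴ.map (starRingEnd ℂ) = ((2:ℂ) * Complex.I) • Viᴴ := by
    rw [hViH, smul_smul, mul_inv_cancel₀ h2I, one_smul]
  -- the key identity : M1 * ImV = -(V1 * (Y1⁻¹ * S))
  have hdiff : M1 * V1 - M1 * W1 =
      ((starRingEnd ℂ) σ - σ) • V1 - ((2:ℂ) * Complex.I) • (V1 * (Y1⁻¹ * (K * Viᴴ))) := by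
    have hCD : V1 * (Y1⁻¹ * (K * Kᴴ)) - V1 * (Y1⁻¹ * (K * (Kᴴ.map (starRingEnd ℂ)))) =
        ((2:ℂ) * Complex.I) • (V1 * (Y1⁻¹ * (K * Viᴴ))) := by
      rw [← Matrix.mul_sub, ← Matrix.mul_sub, ← Matrix.mul_sub, hKHsub]
      simp only [Matrix.mul_smul]
    rw [hM1V1, hM1W1, ← hCD]
    abel
  have hM1ImV : M1 * ImV = -(V1 * (Y1⁻¹ * S)) := by
    rw [hImV2, Matrix.mul_smul, Matrix.mul_sub, hdiff]
    rw [hS, Matrix.mul_add, Matrix.mul_smul, hY1invY1, Matrix.mul_add, Matrix.mul_smul,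
      Matrix.mul_one]
    have hs : ((starRingEnd ℂ) σ - σ) • V1 = ((2:ℂ) * Complex.I) • ((-(σ.im:ℂ)) • V1) := by
      rw [smul_smul]
      congr 1
      have h := Complex.sub_conj σ
      push_cast at h ⊢
      linear_combination -h
    rw [hs, ← smul_sub, smul_smul, inv_mul_cancel₀ h2I, one_smul, neg_smul]
    abel
  -- cancellation
  have hcancel : V1 * (Y1⁻¹ * S) * (S⁻¹ * Y1) = V1 := by
    have h : V1 * (Y1⁻¹ * S) * (S⁻¹ * Y1) = V1 * (Y1⁻¹ * (S * (S⁻¹ * Y1))) := by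
      simp only [Matrix.mul_assoc]
    rw [h, ← Matrix.mul_assoc S, hSS, Matrix.one_mul, hY1invY1, Matrix.mul_one]
  have hV1Yterm : V1 * (Y1⁻¹ * (K * Kᴴ)) =
      (2 * (σ.re : ℂ)) • (V1 * Y1⁻¹) - (2 * (σ.re : ℂ)) • V1 := by
    rw [hKK, Matrix.mul_smul, Matrix.mul_sub, Matrix.mul_one, hY1invY1, Matrix.mul_smul,
      Matrix.mul_sub, Matrix.mul_one, smul_sub]
  -- main identity
  have hmain : M1 * (V1 + (2 * starRingEnd ℂ σ) • (ImV * (S⁻¹ * Y1))) = α • R1 := by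
    rw [Matrix.mul_add, Matrix.mul_smul, ← Matrix.mul_assoc, hM1ImV, Matrix.neg_mul, hcancel,
      hM1V1, hV1Yterm, hR1, smul_add, smul_smul]
    match_scalars
    · ring
    · have h := Complex.add_conj σ
      push_cast at h ⊢
      linear_combination -h
    · linear_combination -hα2
  -- conclude
  have hV2' : M1 * V2 = α • R1 := by
    rw [hV2, Matrix.smul_mul, Matrix.mul_smul, ← Matrix.mul_assoc,
      Matrix.mul_nonsing_inv _ hdet1, Matrix.one_mul]
  have h := congrArg (fun X : Matrix n p ℂ => M1⁻¹ * X) (hV2'.trans hmain.symm)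
  simpa [← Matrix.mul_assoc, Matrix.nonsing_inv_mul _ hdet1, Matrix.one_mul] using h
end
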